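/- For every k ∈ {1,...,n} and every x ∈ [0,1]^n, the k-th order statistic satisfies x_{(k)} = ∑_{S ⊆ {1,...,n}, |S| ≥ k} (−1)^{|S|−k} · binom(|S|−1, k−1) · max_{i∈S} x_i. -/

import Mathlib

open MeasureTheory Finset

/-- The `k`-th order statistic of `x : Fin n → ℝ`, with conventions
`oStat x 0 = 0` and `oStat x k = 1` for `k > n`. For `1 ≤ k ≤ n` it is the
`k`-th smallest coordinate of `x`. -/
noncomputable def oStat {n : ℕ} (x : Fin n → ℝ) (k : ℕ) : ℝ :=
  if k = 0 then 0
  else if k ≤ n then ((Finset.univ.val.map x).sort (· ≤ ·)).getD (k - 1) 0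
  else 1

/-- The `k`-th order statistic of the subfamily `(x i)_{i ∈ S}`. -/
noncomputable def oStatS {n : ℕ} (S : Finset (Fin n)) (x : Fin n → ℝ) (k : ℕ) : ℝ :=
  ((S.val.map x).sort (· ≤ ·)).getD (k - 1) 0

lemma lemA {n : ℕ} (x : Fin n → ℝ) :
    ((Finset.univ.val.map x).sort (· ≤ ·)) = List.ofFn (x ∘ Tuple.sort x) := by
  apply List.Perm.eq_of_pairwise' (Multiset.pairwise_sort _ _)
    (List.sortedLE_ofFn_iff.mpr (Tuple.monotone_sort x)).pairwise
  refine Multiset.coe_eq_coe.mp ?_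
  rw [Multiset.sort_eq]
  calc Finset.univ.val.map x
      = (Multiset.map (⇑(Tuple.sort x)) Finset.univ.val).map x := by
        rw [Multiset.map_univ_val_equiv]
    _ = Finset.univ.val.map (x ∘ Tuple.sort x) := by rw [Multiset.map_map]
    _ = ↑(List.ofFn (x ∘ Tuple.sort x)) := Fin.univ_val_map _

lemma lemA' {n k : ℕ} (x : Fin n → ℝ) (hk : 1 ≤ k) (hkn : k ≤ n) :
    oStat x k = (x ∘ Tuple.sort x) ⟨k - 1, by omega⟩ := by
  rw [oStat, if_neg (by omega), if_pos hkn, lemA]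
  have hlt : k - 1 < (List.ofFn (x ∘ Tuple.sort x)).length := by
    rw [List.length_ofFn]; omega
  rw [List.getD_eq_getElem _ _ hlt, List.getElem_ofFn]

lemma lemB {n : ℕ} (S : Finset (Fin n)) (x : Fin n → ℝ) (h : S.Nonempty) :
    oStatS S x S.card = S.sup' h x := by
  set L := (S.val.map x).sort (· ≤ ·) with hL
  have hlen : L.length = S.card := by
    rw [hL, Multiset.length_sort, Multiset.card_map]; rfl
  have hcard : 1 ≤ S.card := Finset.card_pos.mpr h
  have hlt : S.card - 1 < L.length := by omega
  have hsorted : L.Pairwise (· ≤ ·) := Multiset.pairwise_sort _ _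
  have hmemL : ∀ a, a ∈ L ↔ ∃ i ∈ S, x i = a := by
    intro a
    rw [hL, Multiset.mem_sort, Multiset.mem_map]
    constructor
    · rintro ⟨i, hi, rfl⟩; exact ⟨i, hi, rfl⟩
    · rintro ⟨i, hi, rfl⟩; exact ⟨i, hi, rfl⟩
  rw [oStatS, ← hL, List.getD_eq_getElem _ _ hlt]
  apply le_antisymm
  · obtain ⟨i, hi, hxi⟩ := (hmemL _).mp (List.getElem_mem hlt)
    rw [← hxi]
    exact Finset.le_sup' x hi
  · apply Finset.sup'_le
    intro i hi
    have hmem : x i ∈ L := (hmemL _).mpr ⟨i, hi, rfl⟩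
    obtain ⟨j, hj, hxj⟩ := List.mem_iff_getElem.mp hmem
    rw [← hxj]
    rcases eq_or_lt_of_le (Nat.le_of_lt_succ (by omega : j < S.card - 1 + 1)) with heq | hlt2
    · exact le_of_eq (by congr 1)
    · exact (List.pairwise_iff_getElem.mp hsorted) j (S.card - 1) hj hlt hlt2

lemma altsum (N : ℕ) : ∑ i ∈ range (N+1), (-1:ℝ)^i * N.choose i = if N = 0 then 1 else 0 := by
  have h := Int.alternating_sum_range_choose (n := N)
  have h2 : ((∑ i ∈ range (N+1), (-1:ℤ)^i * N.choose i : ℤ) : ℝ)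
      = ((if N = 0 then 1 else 0 : ℤ) : ℝ) := by exact_mod_cast h
  push_cast at h2
  split_ifs at h2 ⊢ <;> simpa using h2

lemma keyE (b m : ℕ) :
    ∑ j ∈ range (m+1), (if b ≤ j then (-1:ℝ)^(j-b) * (j.choose b) * (m.choose j) else 0)
      = if m = b then 1 else 0 := by
  rcases lt_or_ge m b with h | h
  · rw [if_neg (by omega)]
    apply Finset.sum_eq_zero
    intro j hj
    rw [mem_range] at hj
    rw [if_neg (by omega)]
  · have h0 : ∑ j ∈ range (m+1), (if b ≤ j then (-1:ℝ)^(j-b) * (j.choose b) * (m.choose j) else 0)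
        = ∑ j ∈ Icc b m, (-1:ℝ)^(j-b) * (j.choose b) * (m.choose j) := by
      rw [← Finset.sum_filter]
      congr 1
      ext j
      simp only [mem_filter, mem_range, mem_Icc]
      omega
    rw [h0, show Icc b m = Ico b (m+1) by ext; simp only [mem_Icc, mem_Ico]; omega, Finset.sum_Ico_eq_sum_range]
    have h1 : ∀ t ∈ range (m + 1 - b), (-1:ℝ)^(b+t-b) * ((b+t).choose b) * (m.choose (b+t))
        = (m.choose b : ℝ) * ((-1:ℝ)^t * ((m-b).choose t)) := by
      intro t ht
      rw [mem_range] at ht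
      have hc : m.choose (b+t) * (b+t).choose b = m.choose b * (m-b).choose (b+t-b) :=
        Nat.choose_mul (by omega)
      have hc' : ((b+t).choose b : ℝ) * (m.choose (b+t)) = (m.choose b : ℝ) * ((m-b).choose t) := by
        have ht' : b + t - b = t := by omega
        rw [ht'] at hc
        exact_mod_cast by rw [mul_comm]; exact_mod_cast congrArg (Nat.cast : ℕ → ℝ) hc
      have ht' : b + t - b = t := by omega
      rw [ht']
      calc (-1:ℝ)^t * ((b+t).choose b) * (m.choose (b+t))
          = (-1:ℝ)^t * (((b+t).choose b : ℝ) * (m.choose (b+t))) := by ring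
        _ = (-1:ℝ)^t * ((m.choose b : ℝ) * ((m-b).choose t)) := by rw [hc']
        _ = (m.choose b : ℝ) * ((-1:ℝ)^t * ((m-b).choose t)) := by ring
    rw [Finset.sum_congr rfl h1, ← Finset.mul_sum]
    have h2 : m + 1 - b = (m - b) + 1 := by omega
    rw [h2, altsum]
    rcases eq_or_lt_of_le h with rfl | hlt
    · simp
    · rw [if_neg (by omega), if_neg (by omega), mul_zero]

lemma max'_eq_iff {n : ℕ} (T : Finset (Fin n)) (h : T.Nonempty) (m : Fin n) :
    T.max' h = m ↔ m ∈ T ∧ ∀ i ∈ T, i ≤ m := by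
  constructor
  · rintro rfl
    exact ⟨T.max'_mem h, fun i hi => T.le_max' i hi⟩
  · rintro ⟨hm, hb⟩
    exact le_antisymm (T.max'_le h m hb) (T.le_max' m hm)

lemma countL {n k : ℕ} (hk : 1 ≤ k) (g : Finset (Fin n) → Fin n)
    (hg : ∀ (T : Finset (Fin n)) (h : T.Nonempty), g T = T.max' h) (m : Fin n) :
    ∑ T ∈ (Finset.univ.powerset.filter (fun T : Finset (Fin n) => k ≤ T.card)).filter
        (fun T => g T = m),
      ((-1:ℝ)^(T.card - k) * ((T.card - 1).choose (k-1)))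
    = if (m : ℕ) = k - 1 then 1 else 0 := by
  have hmemA : ∀ T : Finset (Fin n),
      T ∈ (Finset.univ.powerset.filter (fun T : Finset (Fin n) => k ≤ T.card)).filter
        (fun T => g T = m) ↔ k ≤ T.card ∧ m ∈ T ∧ ∀ i ∈ T, i ≤ m := by
    intro T
    simp only [mem_filter, mem_powerset, subset_univ, true_and]
    constructor
    · rintro ⟨hc, hgm⟩
      have hne : T.Nonempty := Finset.card_pos.mp (by omega)
      rw [hg T hne, max'_eq_iff] at hgm
      exact ⟨hc, hgm⟩
    · rintro ⟨hc, hm, hb⟩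
      have hne : T.Nonempty := Finset.card_pos.mp (by omega)
      exact ⟨hc, by rw [hg T hne, max'_eq_iff]; exact ⟨hm, hb⟩⟩
  -- biject with subsets of Iio m
  have step1 : ∑ T ∈ (Finset.univ.powerset.filter (fun T : Finset (Fin n) => k ≤ T.card)).filter
        (fun T => g T = m),
      ((-1:ℝ)^(T.card - k) * ((T.card - 1).choose (k-1)))
      = ∑ T' ∈ (Finset.Iio m).powerset.filter (fun T' => k - 1 ≤ T'.card),
      ((-1:ℝ)^(T'.card + 1 - k) * ((T'.card).choose (k-1))) := by
    apply Finset.sum_nbij' (i := fun T => T.erase m) (j := fun T' => insert m T')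
    · intro T hT
      obtain ⟨hc, hm, hb⟩ := (hmemA T).mp hT
      simp only [mem_filter, mem_powerset]
      constructor
      · intro i hi
        rw [Finset.mem_erase] at hi
        rw [Finset.mem_Iio]
        exact lt_of_le_of_ne (hb i hi.2) hi.1
      · rw [Finset.card_erase_of_mem hm]; omega
    · intro T' hT'
      simp only [mem_filter, mem_powerset] at hT'
      obtain ⟨hsub, hc⟩ := hT'
      have hmn : m ∉ T' := fun hmm => absurd (hsub hmm) (by simp)
      rw [hmemA]
      refine ⟨?_, Finset.mem_insert_self m T', ?_⟩
      · rw [Finset.card_insert_of_notMem hmn]; omega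
      · intro i hi
        rcases Finset.mem_insert.mp hi with rfl | hi'
        · exact le_refl _
        · exact le_of_lt (Finset.mem_Iio.mp (hsub hi'))
    · intro T hT
      obtain ⟨_, hm, _⟩ := (hmemA T).mp hT
      exact Finset.insert_erase hm
    · intro T' hT'
      simp only [mem_filter, mem_powerset] at hT'
      have hmn : m ∉ T' := fun hmm => absurd (hT'.1 hmm) (by simp)
      exact Finset.erase_insert hmn
    · intro T hT
      obtain ⟨hc, hm, _⟩ := (hmemA T).mp hT
      rw [Finset.card_erase_of_mem hm]
      congr 2 <;> omega
  rw [step1, Finset.sum_filter, Finset.powerset_card_disjiUnion]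
  erw [Finset.sum_disjiUnion]
  have hinner : ∀ j ∈ range ((Finset.Iio m).card + 1),
      ∑ T' ∈ Finset.powersetCard j (Finset.Iio m),
        (if k - 1 ≤ T'.card then (-1:ℝ)^(T'.card + 1 - k) * ((T'.card).choose (k-1)) else 0)
      = ((m:ℕ).choose j : ℝ) * (if k - 1 ≤ j then (-1:ℝ)^(j + 1 - k) * (j.choose (k-1)) else 0) := by
    intro j _
    have : ∀ T' ∈ Finset.powersetCard j (Finset.Iio m),
        (if k - 1 ≤ T'.card then (-1:ℝ)^(T'.card + 1 - k) * ((T'.card).choose (k-1)) else 0)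
        = (if k - 1 ≤ j then (-1:ℝ)^(j + 1 - k) * (j.choose (k-1)) else 0) := by
      intro T' hT'
      rw [(Finset.mem_powersetCard.mp hT').2]
    rw [Finset.sum_congr rfl this, Finset.sum_const, Finset.card_powersetCard, Fin.card_Iio,
      nsmul_eq_mul]
  rw [Finset.sum_congr rfl hinner]
  have hfin : ∀ j ∈ range ((Finset.Iio m).card + 1),
      ((m:ℕ).choose j : ℝ) * (if k - 1 ≤ j then (-1:ℝ)^(j + 1 - k) * (j.choose (k-1)) else 0)
      = (if k - 1 ≤ j then (-1:ℝ)^(j - (k-1)) * (j.choose (k-1)) * ((m:ℕ).choose j) else 0) := by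
    intro j _
    split_ifs with hcond
    · have : j + 1 - k = j - (k - 1) := by omega
      rw [this]; ring
    · ring
  rw [Finset.sum_congr rfl hfin, Fin.card_Iio, keyE]

theorem stmt4 (n k : ℕ) (hk : 1 ≤ k) (hkn : k ≤ n)
    (x : Fin n → ℝ) (hx : x ∈ Set.Icc (0 : Fin n → ℝ) 1) :
    oStat x k = ∑ S ∈ Finset.univ.powerset.filter (fun S : Finset (Fin n) => k ≤ S.card),
      (-1 : ℝ) ^ (S.card - k) * (Nat.choose (S.card - 1) (k - 1) : ℝ) * oStatS S x S.card := by
  have npos : 0 < n := by omega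
  set σ := Tuple.sort x with hσ
  set y : Fin n → ℝ := x ∘ ⇑σ with hy
  have hymono : Monotone y := Tuple.monotone_sort x
  set g : Finset (Fin n) → Fin n := fun T => if h : T.Nonempty then T.max' h else ⟨0, npos⟩
    with hgdef
  have hg : ∀ (T : Finset (Fin n)) (h : T.Nonempty), g T = T.max' h := by
    intro T h
    simp only [hgdef, dif_pos h]
  set A := Finset.univ.powerset.filter (fun S : Finset (Fin n) => k ≤ S.card) with hA
  have hmaxy : ∀ (T : Finset (Fin n)) (h : T.Nonempty), T.sup' h y = y (T.max' h) := by
    intro T h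
    apply le_antisymm
    · exact Finset.sup'_le h y fun i hi => hymono (T.le_max' i hi)
    · exact Finset.le_sup' y (T.max'_mem h)
  have step1 : ∑ S ∈ A, (-1:ℝ)^(S.card-k) * (((S.card-1).choose (k-1) : ℕ) : ℝ) * oStatS S x S.card
      = ∑ T ∈ A, (-1:ℝ)^(T.card-k) * (((T.card-1).choose (k-1) : ℕ) : ℝ) * y (g T) := by
    apply Finset.sum_nbij' (i := fun S => S.map σ.symm.toEmbedding)
      (j := fun T => T.map σ.toEmbedding)
    · intro S hS
      rw [hA, mem_filter, mem_powerset] at hS ⊢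
      simpa using hS.2
    · intro T hT
      rw [hA, mem_filter, mem_powerset] at hT ⊢
      simpa using hT.2
    · intro S _
      ext a
      simp
    · intro T _
      ext a
      simp
    · intro S hS
      rw [hA, mem_filter] at hS
      have hne : S.Nonempty := Finset.card_pos.mp (by omega)
      have hneT : (S.map σ.symm.toEmbedding).Nonempty := Finset.Nonempty.map hne
      rw [Finset.card_map, lemB S x hne, hg _ hneT, ← hmaxy _ hneT, Finset.sup'_map]
      congr 1
      apply Finset.sup'_congr _ rfl
      intro i _
      simp [hy]
  have step2 : ∑ T ∈ A, (-1:ℝ)^(T.card-k) * (((T.card-1).choose (k-1) : ℕ) : ℝ) * y (g T)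
      = ∑ m : Fin n, ∑ T ∈ A.filter (fun T => g T = m),
          (-1:ℝ)^(T.card-k) * (((T.card-1).choose (k-1) : ℕ) : ℝ) * y (g T) :=
    (Finset.sum_fiberwise_of_maps_to (fun T _ => mem_univ (g T)) _).symm
  have step3 : ∀ m : Fin n, ∑ T ∈ A.filter (fun T => g T = m),
        (-1:ℝ)^(T.card-k) * (((T.card-1).choose (k-1) : ℕ) : ℝ) * y (g T)
      = (if (m : ℕ) = k - 1 then 1 else 0) * y m := by
    intro m
    have : ∀ T ∈ A.filter (fun T => g T = m),
        (-1:ℝ)^(T.card-k) * (((T.card-1).choose (k-1) : ℕ) : ℝ) * y (g T)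
        = ((-1:ℝ)^(T.card-k) * (((T.card-1).choose (k-1) : ℕ) : ℝ)) * y m := by
      intro T hT
      rw [mem_filter] at hT
      rw [hT.2]
    rw [Finset.sum_congr rfl this, ← Finset.sum_mul, hA, countL hk g hg m]
  rw [step1, step2, Finset.sum_congr rfl (fun m _ => step3 m)]
  have hfinal : ∑ m : Fin n, (if (m : ℕ) = k - 1 then 1 else 0) * y m = y ⟨k - 1, by omega⟩ := by
    rw [Finset.sum_eq_single (⟨k - 1, by omega⟩ : Fin n)]
    · simp
    · intro m _ hne
      rw [if_neg (fun h => hne (Fin.ext h)), zero_mul]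
    · intro h
      exact absurd (mem_univ _) h
  rw [hfinal]
  exact lemA' x hk hkn
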